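/- arXiv:1111.2113 — 3 statements merged into one kernel-verified Lean document; each statement's English description precedes it below -/
import Mathlib

section
/- Let m be a positive integer and let W = sqrt(Q/m) where Q follows a chi-squared distribution with m degrees of freedom, with probability density f_W. Then for every real x, ∫_0^∞ φ(wx) w² f_W(w) dw = (1/√(2π)) (m/(x²+m))^{(m/2)+1}, where φ denotes the standard normal probability density function. -/
open MeasureTheory Real Set

/-- Standard normal probability density function. -/
noncomputable def stdPDF (u : ℝ) : ℝ := (Real.sqrt (2 * Real.pi))⁻¹ * Real.exp (-u ^ 2 / 2)

/-- Density of the chi-squared distribution with `m` degrees of freedom. -/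
noncomputable def chisqPDF (m : ℕ) (q : ℝ) : ℝ :=
  if 0 < q then q ^ ((m : ℝ) / 2 - 1) * Real.exp (-q / 2) /
    (2 ^ ((m : ℝ) / 2) * Real.Gamma ((m : ℝ) / 2)) else 0

/-- Density of `W = sqrt(Q/m)` where `Q ~ χ²_m`. -/
noncomputable def fW (m : ℕ) (w : ℝ) : ℝ := 2 * m * w * chisqPDF m (m * w ^ 2)

theorem stmt0 (m : ℕ) (hm : 0 < m) (x : ℝ) :
    ∫ w in Set.Ioi (0 : ℝ), stdPDF (w * x) * w ^ 2 * fW m w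
      = (Real.sqrt (2 * Real.pi))⁻¹ * ((m / (x ^ 2 + m)) ^ ((m : ℝ) / 2 + 1)) := by
  have hmR : (0:ℝ) < m := Nat.cast_pos.mpr hm
  set s : ℝ := (m : ℝ) / 2 with hs
  have hs0 : 0 < s := by positivity
  set b : ℝ := (x ^ 2 + (m:ℝ)) / 2 with hb
  have hb0 : 0 < b := by positivity
  set C : ℝ := (Real.sqrt (2 * Real.pi))⁻¹ * (2 * ((m:ℝ) * (m:ℝ) ^ (s - 1)))
      / (2 ^ s * Real.Gamma s) with hC
  have key : ∀ w ∈ Ioi (0:ℝ),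
      stdPDF (w * x) * w ^ 2 * fW m w = C * (w ^ ((m:ℝ) + 1) * Real.exp (-b * w ^ (2:ℝ))) := by
    intro w hw
    have hw0 : (0:ℝ) < w := hw
    have hq : (0:ℝ) < (m:ℝ) * w ^ 2 := by positivity
    rw [stdPDF, fW, chisqPDF, if_pos hq]
    have h1 : ((m:ℝ) * w ^ 2) ^ (s - 1) = (m:ℝ) ^ (s - 1) * w ^ ((m:ℝ) - 2) := by
      rw [Real.mul_rpow hmR.le (sq_nonneg w), ← Real.rpow_natCast w 2,
        ← Real.rpow_mul hw0.le]
      congr 1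
      push_cast
      rw [hs]; ring
    have h20 : w ^ (2:ℝ) = w ^ 2 := by
      rw [← Real.rpow_natCast w 2]; norm_num
    have h2 : w ^ ((m:ℝ) + 1) = w ^ 2 * w * w ^ ((m:ℝ) - 2) := by
      have h21 : w ^ 2 * w = w ^ (3:ℝ) := by
        rw [← pow_succ, ← Real.rpow_natCast w 3]; norm_num
      rw [h21, ← Real.rpow_add hw0]
      congr 1
      ring
    have h3 : Real.exp (-(w * x) ^ 2 / 2) * Real.exp (-((m:ℝ) * w ^ 2) / 2)
        = Real.exp (-(b * w ^ 2)) := by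
      rw [← Real.exp_add]
      congr 1
      rw [hb]; ring
    rw [hC, h20, h1, h2]
    field_simp
    have h3' : Real.exp (-(w ^ 2 * x ^ 2 / 2)) * Real.exp (-(w ^ 2 * (m:ℝ) / 2))
        = Real.exp (-(w ^ 2 * b)) := by
      rw [← Real.exp_add]
      congr 1
      rw [hb]; ring
    rw [h3', hs]
    ring
  rw [setIntegral_congr_fun measurableSet_Ioi key, integral_const_mul,
    integral_rpow_mul_exp_neg_mul_rpow (by norm_num) (by linarith) hb0]
  have hGamma : Real.Gamma (((m:ℝ) + 1 + 1) / 2) = s * Real.Gamma s := by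
    have h : ((m:ℝ) + 1 + 1) / 2 = s + 1 := by rw [hs]; ring
    rw [h, Real.Gamma_add_one hs0.ne']
  rw [hGamma]
  have hbpow : b ^ (-((m:ℝ) + 1 + 1) / 2) = (x ^ 2 + (m:ℝ)) ^ (-(s + 1)) / 2 ^ (-(s + 1)) := by
    have he : -((m:ℝ) + 1 + 1) / 2 = -(s + 1) := by rw [hs]; ring
    rw [he, hb, Real.div_rpow (by positivity) (by norm_num)]
  rw [hbpow]
  have hmpow : (m:ℝ) * (m:ℝ) ^ (s - 1) = (m:ℝ) ^ s := by
    rw [Real.rpow_sub hmR, Real.rpow_one]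
    field_simp
  have hmdiv : ((m:ℝ) / (x ^ 2 + (m:ℝ))) ^ (s + 1)
      = (m:ℝ) ^ (s + 1) * (x ^ 2 + (m:ℝ)) ^ (-(s + 1)) := by
    rw [Real.div_rpow hmR.le (by positivity), Real.rpow_neg (by positivity), div_eq_mul_inv]
  have hms : (m:ℝ) ^ (s + 1) = (m:ℝ) ^ s * (m:ℝ) := by
    rw [Real.rpow_add hmR, Real.rpow_one]
  have h2s : (2:ℝ) ^ (-(s + 1)) = (2 ^ s * 2)⁻¹ := by
    rw [Real.rpow_neg (by norm_num), Real.rpow_add (by norm_num), Real.rpow_one]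
  have hm2 : (m:ℝ) = 2 * s := by rw [hs]; ring
  have hGne : Real.Gamma s ≠ 0 := (Real.Gamma_pos_of_pos hs0).ne'
  have h2sne : (2:ℝ) ^ s ≠ 0 := by positivity
  rw [hmdiv, hms, hC, hmpow, h2s, hm2]
  field_simp
end

section
/- Let m be a positive integer, λ ∈ (0,1), x ≥ 0, and suppose λ = λ(m) solves √m·√((√(2/π)·(1−λ) t(m) E(W)/λ)^{2/(m+2)} − 1) = t(m). Then the function t ↦ C·t − ∫_0^∞ Φ(tw) φ(wx) w f_W(w) dw, where C = (λ/(2(1−λ) t(m) E(W))) ∫_0^∞ φ(wx) w² f_W(w) dw, attains its minimum over t > 0 at t = √(1 + x²/m) · t(m). -/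
open MeasureTheory Real Set Filter

/-- Standard normal cumulative distribution function. -/
noncomputable def stdCDF (u : ℝ) : ℝ := ∫ t in Set.Iic u, stdPDF t

/-- `E(W)` for `W = sqrt(Q/m)`, `Q ~ χ²_m`. -/
noncomputable def EW (m : ℕ) : ℝ := ∫ w in Set.Ioi (0 : ℝ), w * fW m w

/-- Density of the Student t distribution with `m` degrees of freedom. -/
noncomputable def tPDF (m : ℕ) (x : ℝ) : ℝ :=
  Real.Gamma (((m : ℝ) + 1) / 2) / (Real.sqrt (m * Real.pi) * Real.Gamma ((m : ℝ) / 2)) *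
    (1 + x ^ 2 / m) ^ (-(((m : ℝ) + 1) / 2))

/-- The one-dimensional criterion `t ↦ C t − ∫₀^∞ Φ(tw) φ(wx) w f_W(w) dw`. -/
noncomputable def crit (m : ℕ) (l tm x t : ℝ) : ℝ :=
  (l / (2 * (1 - l) * tm * EW m) *
      ∫ w in Set.Ioi (0 : ℝ), stdPDF (w * x) * w ^ 2 * fW m w) * t -
    ∫ w in Set.Ioi (0 : ℝ), stdCDF (t * w) * stdPDF (w * x) * w * fW m w

noncomputable def Cm (m : ℕ) : ℝ :=
  2 * (m : ℝ) ^ ((m : ℝ) / 2) / (2 ^ ((m : ℝ) / 2) * Real.Gamma ((m : ℝ) / 2))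

lemma Cm_pos {m : ℕ} (hm : 0 < m) : 0 < Cm m := by
  have hμ : (0:ℝ) < (m:ℝ) := by exact_mod_cast hm
  have hG : 0 < Real.Gamma ((m:ℝ)/2) := Real.Gamma_pos_of_pos (by positivity)
  unfold Cm
  have h1 : (0:ℝ) < (m:ℝ) ^ ((m:ℝ)/2) := Real.rpow_pos_of_pos hμ _
  have h2 : (0:ℝ) < (2:ℝ) ^ ((m:ℝ)/2) := Real.rpow_pos_of_pos two_pos _
  positivity

lemma fW_eq {m : ℕ} (hm : 0 < m) {w : ℝ} (hw : 0 < w) :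
    fW m w = Cm m * (w ^ ((m : ℝ) - 1) * Real.exp (-((m : ℝ) / 2) * w ^ 2)) := by
  have hμ : (0:ℝ) < (m:ℝ) := by exact_mod_cast hm
  have hq : 0 < (m:ℝ) * w ^ 2 := by positivity
  unfold fW chisqPDF Cm
  rw [if_pos hq]
  have h1 : ((m:ℝ) * w ^ 2) ^ ((m:ℝ)/2 - 1)
      = (m:ℝ) ^ ((m:ℝ)/2 - 1) * w ^ ((m:ℝ) - 2) := by
    rw [Real.mul_rpow hμ.le (by positivity), ← Real.rpow_natCast w 2,
      ← Real.rpow_mul hw.le]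
    push_cast
    norm_num
    left
    congr 1
    ring
  rw [h1]
  have h2 : (m:ℝ) ^ ((m:ℝ)/2 - 1) * (m:ℝ) = (m:ℝ) ^ ((m:ℝ)/2) := by
    rw [← Real.rpow_add_one hμ.ne']
    ring_nf
  have h3 : w ^ ((m:ℝ) - 2) * w = w ^ ((m:ℝ) - 1) := by
    rw [← Real.rpow_add_one hw.ne']
    ring_nf
  have h4 : Real.exp (-((m:ℝ) * w ^ 2) / 2) = Real.exp (-((m:ℝ)/2) * w ^ 2) := by
    ring_nf
  rw [← h2, ← h3, ← h4]
  ring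

lemma int_fW_key {m : ℕ} (hm : 0 < m) {a : ℝ} (ha : 0 ≤ a) :
    ∫ w in Set.Ioi (0:ℝ), w ^ 2 * fW m w * Real.exp (-(a * w ^ 2) / 2)
      = ((m : ℝ) / ((m : ℝ) + a)) ^ ((m : ℝ) / 2 + 1) := by
  have hμ : (0:ℝ) < (m:ℝ) := by exact_mod_cast hm
  have hb : (0:ℝ) < ((m:ℝ) + a) / 2 := by positivity
  have hG : 0 < Real.Gamma ((m:ℝ)/2) := Real.Gamma_pos_of_pos (by positivity)
  have hcongr : ∀ w ∈ Set.Ioi (0:ℝ),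
      w ^ 2 * fW m w * Real.exp (-(a * w ^ 2) / 2)
        = Cm m * (w ^ ((m:ℝ) + 1) * Real.exp (-(((m:ℝ) + a)/2) * w ^ (2:ℝ))) := by
    intro w hw
    rw [fW_eq hm hw]
    have h3 : w ^ ((m:ℝ) - 1) * w ^ 2 = w ^ ((m:ℝ) + 1) := by
      rw [← Real.rpow_natCast w 2, ← Real.rpow_add hw]
      congr 1
      push_cast
      ring
    have h5 : w ^ (2:ℝ) = w ^ 2 := by
      rw [← Real.rpow_natCast w 2]; norm_num
    have hexp : Real.exp (-(((m:ℝ)+a)/2) * w ^ 2)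
        = Real.exp (-((m:ℝ)/2) * w ^ 2) * Real.exp (-(a * w ^ 2) / 2) := by
      rw [← Real.exp_add]; congr 1; ring
    rw [h5, hexp, ← h3]
    ring
  rw [setIntegral_congr_fun measurableSet_Ioi hcongr, integral_const_mul,
    integral_rpow_mul_exp_neg_mul_rpow two_pos (by linarith) hb]
  have hΓ : Real.Gamma (((m:ℝ) + 1 + 1)/2) = (m:ℝ)/2 * Real.Gamma ((m:ℝ)/2) := by
    have : ((m:ℝ) + 1 + 1)/2 = (m:ℝ)/2 + 1 := by ring
    rw [this, Real.Gamma_add_one (by positivity)]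
  rw [hΓ]
  unfold Cm
  rw [show (-((m:ℝ) + 1 + 1)/2 : ℝ) = -((m:ℝ)/2 + 1) by ring]
  rw [Real.div_rpow hμ.le (by positivity), Real.rpow_neg hb.le,
    Real.div_rpow (by linarith : (0:ℝ) ≤ (m:ℝ) + a) (by norm_num : (0:ℝ) ≤ 2)]
  have e1 : (m:ℝ) ^ ((m:ℝ)/2 + 1) = (m:ℝ) ^ ((m:ℝ)/2) * (m:ℝ) := by
    rw [← Real.rpow_add_one hμ.ne']
  have e2 : (2:ℝ) ^ ((m:ℝ)/2 + 1) = (2:ℝ) ^ ((m:ℝ)/2) * 2 := by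
    rw [← Real.rpow_add_one (two_ne_zero)]
  have hma : (0:ℝ) < ((m:ℝ) + a) ^ ((m:ℝ)/2 + 1) := Real.rpow_pos_of_pos (by linarith) _
  have h2m : (0:ℝ) < (2:ℝ) ^ ((m:ℝ)/2) := Real.rpow_pos_of_pos two_pos _
  rw [e1, e2]
  field_simp

lemma chisqPDF_nonneg (m : ℕ) (q : ℝ) : 0 ≤ chisqPDF m q := by
  unfold chisqPDF
  split_ifs with h
  · have hG : 0 ≤ Real.Gamma ((m:ℝ)/2) := by
      rcases eq_or_lt_of_le (Nat.cast_nonneg (α := ℝ) m) with h0 | h0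
      · simp [← h0, Real.Gamma_zero]
      · exact (Real.Gamma_pos_of_pos (by positivity)).le
    positivity
  · exact le_rfl

lemma fW_nonneg (m : ℕ) {w : ℝ} (hw : 0 ≤ w) : 0 ≤ fW m w := by
  unfold fW
  have h := chisqPDF_nonneg m ((m:ℝ) * w ^ 2)
  have h2 : (0:ℝ) ≤ 2 * (m:ℝ) * w := by positivity
  exact mul_nonneg h2 h

lemma measurable_chisqPDF (m : ℕ) : Measurable (chisqPDF m) := by
  unfold chisqPDF
  apply Measurable.ite (measurableSet_lt measurable_const measurable_id)
  · have h1 : Measurable fun x : ℝ => x ^ ((m:ℝ)/2 - 1) := by measurability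
    have h2 : Measurable fun x : ℝ => Real.exp (-x / 2) :=
      Real.measurable_exp.comp (by fun_prop)
    exact (h1.mul h2).div_const _
  · exact measurable_const

lemma measurable_fW (m : ℕ) : Measurable (fW m) := by
  unfold fW
  exact (by fun_prop : Measurable fun w : ℝ => 2 * (m:ℝ) * w).mul
    ((measurable_chisqPDF m).comp (by fun_prop))

lemma integrableOn_pow_fW_exp {m : ℕ} (hm : 0 < m) (k : ℕ) {a : ℝ} (ha : 0 ≤ a) :
    IntegrableOn (fun w => w ^ k * fW m w * Real.exp (-(a * w ^ 2) / 2))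
      (Set.Ioi (0:ℝ)) := by
  have hμ : (0:ℝ) < (m:ℝ) := by exact_mod_cast hm
  have base : IntegrableOn
      (fun w : ℝ => Cm m * (w ^ ((m:ℝ) + k - 1) * Real.exp (-(((m:ℝ)+a)/2) * w ^ 2)))
      (Set.Ioi (0:ℝ)) := by
    exact (integrableOn_rpow_mul_exp_neg_mul_sq (by positivity) (by linarith)).const_mul _
  apply base.congr_fun _ measurableSet_Ioi
  intro w hw
  dsimp only
  rw [fW_eq hm hw]
  have h3 : w ^ ((m:ℝ) - 1) * w ^ k = w ^ ((m:ℝ) + k - 1) := by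
    rw [← Real.rpow_natCast w k, ← Real.rpow_add hw]
    congr 1; ring
  have hexp : Real.exp (-(((m:ℝ)+a)/2) * w ^ 2)
      = Real.exp (-((m:ℝ)/2) * w ^ 2) * Real.exp (-(a * w ^ 2) / 2) := by
    rw [← Real.exp_add]; congr 1; ring
  rw [hexp, ← h3]
  ring

lemma EW_pos {m : ℕ} (hm : 0 < m) : 0 < EW m := by
  have hμ : (0:ℝ) < (m:ℝ) := by exact_mod_cast hm
  have hcongr : ∀ w ∈ Set.Ioi (0:ℝ),
      w * fW m w = Cm m * (w ^ ((m:ℝ)) * Real.exp (-((m:ℝ)/2) * w ^ (2:ℝ))) := by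
    intro w hw
    rw [fW_eq hm hw]
    have h5 : w ^ (2:ℝ) = w ^ 2 := by
      rw [← Real.rpow_natCast w 2]; norm_num
    have h3 : w ^ ((m:ℝ) - 1) * w = w ^ ((m:ℝ)) := by
      rw [← Real.rpow_add_one hw.ne']; congr 1; ring
    rw [h5, ← h3]; ring
  unfold EW
  rw [setIntegral_congr_fun measurableSet_Ioi hcongr, integral_const_mul,
    integral_rpow_mul_exp_neg_mul_rpow two_pos (by linarith) (by positivity)]
  have h1 := Cm_pos hm
  have h2 : 0 < Real.Gamma (((m:ℝ)+1)/2) := Real.Gamma_pos_of_pos (by positivity)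
  have h3 : (0:ℝ) < ((m:ℝ)/2) ^ (-((m:ℝ)+1)/2) :=
    Real.rpow_pos_of_pos (by positivity) _
  positivity

lemma stdPDF_nonneg (u : ℝ) : 0 ≤ stdPDF u := by unfold stdPDF; positivity

lemma stdPDF_le (u : ℝ) : stdPDF u ≤ (Real.sqrt (2 * Real.pi))⁻¹ := by
  unfold stdPDF
  have h : Real.exp (-u ^ 2 / 2) ≤ 1 := Real.exp_le_one_iff.2 (by nlinarith [sq_nonneg u])
  exact mul_le_of_le_one_right (by positivity) h

lemma stdPDF_anti {u v : ℝ} (h0 : 0 ≤ u) (huv : u ≤ v) : stdPDF v ≤ stdPDF u := by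
  unfold stdPDF
  have h : Real.exp (-v ^ 2 / 2) ≤ Real.exp (-u ^ 2 / 2) :=
    Real.exp_le_exp.2 (by nlinarith)
  exact mul_le_mul_of_nonneg_left h (by positivity)

lemma stdPDF_eq : stdPDF = fun u => (Real.sqrt (2 * Real.pi))⁻¹ * Real.exp (-(1/2:ℝ) * u ^ 2) := by
  funext u; unfold stdPDF; ring_nf

lemma integrable_stdPDF : Integrable stdPDF := by
  rw [stdPDF_eq]
  exact (integrable_exp_neg_mul_sq (by norm_num)).const_mul _

lemma integral_stdPDF : ∫ u, stdPDF u = 1 := by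
  rw [stdPDF_eq]
  rw [MeasureTheory.integral_const_mul, integral_gaussian,
    show Real.pi / (1/2 : ℝ) = 2 * Real.pi by ring]
  exact inv_mul_cancel₀ (ne_of_gt (Real.sqrt_pos.2 (by positivity)))

lemma stdCDF_nonneg (u : ℝ) : 0 ≤ stdCDF u :=
  setIntegral_nonneg measurableSet_Iic fun _ _ => stdPDF_nonneg _

lemma stdCDF_le_one (u : ℝ) : stdCDF u ≤ 1 := by
  rw [← integral_stdPDF]
  exact setIntegral_le_integral integrable_stdPDF
    (Filter.Eventually.of_forall fun _ => stdPDF_nonneg _)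

lemma stdCDF_mono : Monotone stdCDF := fun u v huv =>
  setIntegral_mono_set integrable_stdPDF.integrableOn
    (Filter.Eventually.of_forall fun _ => stdPDF_nonneg _)
    (HasSubset.Subset.eventuallyLE (Set.Iic_subset_Iic.2 huv))

lemma stdCDF_sub {a b : ℝ} (hab : a ≤ b) :
    stdCDF b - stdCDF a = ∫ u in Set.Ioc a b, stdPDF u := by
  unfold stdCDF
  rw [intervalIntegral.integral_Iic_sub_Iic integrable_stdPDF.integrableOn integrable_stdPDF.integrableOn,
    intervalIntegral.integral_of_le hab]

lemma const_int_Ioc {a b c : ℝ} (hab : a ≤ b) :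
    ∫ _ in Set.Ioc a b, c = c * (b - a) := by
  rw [setIntegral_const, Real.volume_real_Ioc_of_le hab,
    smul_eq_mul, mul_comm]

lemma stdCDF_diff_ge {a b : ℝ} (h0 : 0 ≤ a) (hab : a ≤ b) :
    stdPDF b * (b - a) ≤ stdCDF b - stdCDF a := by
  rw [stdCDF_sub hab, ← const_int_Ioc (c := stdPDF b) hab]
  refine setIntegral_mono_on (integrableOn_const measure_Ioc_lt_top.ne)
    integrable_stdPDF.integrableOn measurableSet_Ioc fun u hu => ?_
  exact stdPDF_anti (le_trans h0 hu.1.le) hu.2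

lemma stdCDF_diff_le {a b : ℝ} (h0 : 0 ≤ a) (hab : a ≤ b) :
    stdCDF b - stdCDF a ≤ stdPDF a * (b - a) := by
  rw [stdCDF_sub hab, ← const_int_Ioc (c := stdPDF a) hab]
  refine setIntegral_mono_on integrable_stdPDF.integrableOn
    (integrableOn_const measure_Ioc_lt_top.ne) measurableSet_Ioc fun u hu => ?_
  exact stdPDF_anti h0 hu.1.le

lemma prod_pdf (m : ℕ) (s x w : ℝ) :
    stdPDF (s * w) * stdPDF (w * x) * w ^ 2 * fW m w
      = (2 * Real.pi)⁻¹ * (w ^ 2 * fW m w * Real.exp (-((s^2 + x^2) * w ^ 2) / 2)) := by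
  unfold stdPDF
  have h1 : (Real.sqrt (2*Real.pi))⁻¹ * (Real.sqrt (2*Real.pi))⁻¹ = (2*Real.pi)⁻¹ := by
    rw [← mul_inv, Real.mul_self_sqrt (by positivity)]
  have h2 : Real.exp (-(s*w)^2/2) * Real.exp (-(w*x)^2/2)
      = Real.exp (-((s^2 + x^2) * w ^ 2) / 2) := by
    rw [← Real.exp_add]; congr 1; ring
  rw [← h2, ← h1]; ring

lemma single_pdf (m : ℕ) (x w : ℝ) :
    stdPDF (w * x) * w ^ 2 * fW m w
      = (Real.sqrt (2*Real.pi))⁻¹ * (w ^ 2 * fW m w * Real.exp (-(x^2 * w ^ 2) / 2)) := by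
  unfold stdPDF
  rw [show (-(w*x)^2/2 : ℝ) = -(x^2 * w ^ 2)/2 by ring]; ring

lemma int_single {m : ℕ} (hm : 0 < m) (x : ℝ) :
    ∫ w in Set.Ioi (0:ℝ), stdPDF (w * x) * w ^ 2 * fW m w
      = (Real.sqrt (2*Real.pi))⁻¹ * ((m:ℝ)/((m:ℝ)+x^2)) ^ ((m:ℝ)/2+1) := by
  simp_rw [single_pdf]
  rw [integral_const_mul, int_fW_key hm (sq_nonneg x)]

lemma int_prod {m : ℕ} (hm : 0 < m) (s x : ℝ) :
    ∫ w in Set.Ioi (0:ℝ), stdPDF (s*w) * stdPDF (w * x) * w ^ 2 * fW m w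
      = (2*Real.pi)⁻¹ * ((m:ℝ)/((m:ℝ)+(s^2+x^2))) ^ ((m:ℝ)/2+1) := by
  simp_rw [prod_pdf]
  rw [integral_const_mul, int_fW_key hm (by positivity)]

lemma integrableOn_prod {m : ℕ} (hm : 0 < m) (s x : ℝ) :
    IntegrableOn (fun w => stdPDF (s*w) * stdPDF (w * x) * w ^ 2 * fW m w)
      (Set.Ioi (0:ℝ)) := by
  simp_rw [prod_pdf]
  exact (integrableOn_pow_fW_exp hm 2 (by positivity : (0:ℝ) ≤ s^2+x^2)).const_mul _

lemma integrableOn_mul_fW {m : ℕ} (hm : 0 < m) :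
    IntegrableOn (fun w => w * fW m w) (Set.Ioi (0:ℝ)) := by
  have h := integrableOn_pow_fW_exp hm 1 (le_refl (0:ℝ))
  simpa using h

lemma measurable_stdPDF_comp (x : ℝ) : Measurable fun w : ℝ => stdPDF (w * x) := by
  unfold stdPDF
  exact (measurable_const.mul (Real.measurable_exp.comp (by fun_prop)))

lemma integrableOn_cdf {m : ℕ} (hm : 0 < m) (t x : ℝ) :
    IntegrableOn (fun w => stdCDF (t*w) * stdPDF (w * x) * w * fW m w)
      (Set.Ioi (0:ℝ)) := by
  have hbase : IntegrableOn (fun w => (Real.sqrt (2*Real.pi))⁻¹ * (w * fW m w))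
      (Set.Ioi (0:ℝ)) := (integrableOn_mul_fW hm).const_mul _
  refine hbase.mono' ?_ ?_
  · refine Measurable.aestronglyMeasurable ?_
    exact (((stdCDF_mono.measurable.comp (by fun_prop)).mul
      (measurable_stdPDF_comp x)).mul measurable_id).mul (measurable_fW m)
  · rw [ae_restrict_iff' measurableSet_Ioi]
    refine Filter.Eventually.of_forall fun w hw => ?_
    have hw' : (0:ℝ) < w := hw
    have hF := fW_nonneg m hw'.le
    have hB := stdPDF_nonneg (w * x)
    have hA := stdCDF_nonneg (t * w)
    have h1 := stdCDF_le_one (t * w)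
    have h2 := stdPDF_le (w * x)
    rw [Real.norm_eq_abs, abs_of_nonneg (by
      exact mul_nonneg (mul_nonneg (mul_nonneg hA hB) hw'.le) hF)]
    calc stdCDF (t*w) * stdPDF (w*x) * w * fW m w
        ≤ 1 * (Real.sqrt (2*Real.pi))⁻¹ * w * fW m w := by
          apply mul_le_mul_of_nonneg_right _ hF
          apply mul_le_mul_of_nonneg_right _ hw'.le
          exact mul_le_mul h1 h2 hB zero_le_one
      _ = (Real.sqrt (2*Real.pi))⁻¹ * (w * fW m w) := by ring

theorem stmt8 (m : ℕ) (hm : 0 < m) (α : ℝ) (hα : α ∈ Set.Ioo (0 : ℝ) 1)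
    (tm : ℝ) (htm : 0 < tm) (hq : ∫ x in Set.Ioo (-tm) tm, tPDF m x = 1 - α)
    (x : ℝ) (hx : 0 ≤ x) (l : ℝ) (hl : l ∈ Set.Ioo (0 : ℝ) 1)
    (hlm : Real.sqrt m *
        Real.sqrt ((Real.sqrt (2 / Real.pi) * (1 - l) * tm * EW m / l)
            ^ ((2 : ℝ) / ((m : ℝ) + 2)) - 1) = tm) :
    ∀ t : ℝ, 0 < t →
      crit m l tm x (Real.sqrt (1 + x ^ 2 / m) * tm) ≤ crit m l tm x t := by
  intro t ht
  obtain ⟨hl0, hl1⟩ := hl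
  have hμ : (0:ℝ) < (m:ℝ) := by exact_mod_cast hm
  have hE := EW_pos hm
  have h1l : (0:ℝ) < 1 - l := by linarith
  have hsq : (0:ℝ) < 1 + x ^ 2 / (m:ℝ) := by positivity
  set s := Real.sqrt (1 + x ^ 2 / (m:ℝ)) * tm with hs_def
  have hs : 0 < s := mul_pos (Real.sqrt_pos.2 hsq) htm
  have hs2 : s ^ 2 = (1 + x ^ 2 / (m:ℝ)) * tm ^ 2 := by
    rw [hs_def, mul_pow, Real.sq_sqrt hsq.le]
  -- the constant A from the λ(m) equation
  set A := Real.sqrt (2 / Real.pi) * (1 - l) * tm * EW m / l with hA_def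
  have hS2 : (0:ℝ) < Real.sqrt (2 / Real.pi) := Real.sqrt_pos.2 (by positivity)
  have hA : 0 < A := by rw [hA_def]; positivity
  -- derive (1 + tm²/m) ^ ((m+2)/2) = A
  have hy : 0 < A ^ ((2:ℝ) / ((m:ℝ) + 2)) - 1 := by
    by_contra h
    push_neg at h
    have h0 : Real.sqrt (A ^ ((2:ℝ) / ((m:ℝ) + 2)) - 1) = 0 :=
      Real.sqrt_eq_zero_of_nonpos (by linarith)
    rw [h0, mul_zero] at hlm
    linarith
  have htm2 : tm ^ 2 = (m:ℝ) * (A ^ ((2:ℝ) / ((m:ℝ) + 2)) - 1) := by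
    rw [← hlm, mul_pow, Real.sq_sqrt hμ.le, Real.sq_sqrt hy.le]
  have hAy : A ^ ((2:ℝ) / ((m:ℝ) + 2)) = 1 + tm ^ 2 / (m:ℝ) := by
    rw [htm2]; field_simp; ring
  have hD : (1 + tm ^ 2 / (m:ℝ)) ^ (((m:ℝ) + 2) / 2) = A := by
    rw [← hAy, ← Real.rpow_mul hA.le,
      show (2:ℝ) / ((m:ℝ)+2) * (((m:ℝ)+2)/2) = 1 by field_simp, Real.rpow_one]
  -- key identity: C0 = K
  have hCK : l / (2 * (1 - l) * tm * EW m) *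
      (∫ w in Set.Ioi (0:ℝ), stdPDF (w * x) * w ^ 2 * fW m w)
      = ∫ w in Set.Ioi (0:ℝ), stdPDF (s * w) * stdPDF (w * x) * w ^ 2 * fW m w := by
    rw [int_single hm x, int_prod hm s x]
    have hx2 : (m:ℝ) + (s ^ 2 + x ^ 2) = ((m:ℝ) + x ^ 2) * (1 + tm ^ 2 / (m:ℝ)) := by
      rw [hs2]; field_simp; ring
    have hmx : (0:ℝ) < (m:ℝ) + x ^ 2 := by positivity
    have htm' : (0:ℝ) < 1 + tm ^ 2 / (m:ℝ) := by positivity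
    have hP2 : ((m:ℝ) / ((m:ℝ) + (s ^ 2 + x ^ 2))) ^ ((m:ℝ)/2 + 1)
        = ((m:ℝ) / ((m:ℝ) + x ^ 2)) ^ ((m:ℝ)/2 + 1) * A⁻¹ := by
      rw [hx2, show (m:ℝ) / (((m:ℝ) + x ^ 2) * (1 + tm ^ 2 / (m:ℝ)))
          = ((m:ℝ) / ((m:ℝ) + x ^ 2)) * (1 + tm ^ 2 / (m:ℝ))⁻¹ by field_simp,
        Real.mul_rpow (by positivity) (by positivity),
        Real.inv_rpow htm'.le, show ((m:ℝ)/2 + 1) = ((m:ℝ)+2)/2 by ring, hD]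
    rw [hP2]
    have hS1 : Real.sqrt (2 * Real.pi) = Real.pi * Real.sqrt (2 / Real.pi) := by
      rw [show (2 * Real.pi : ℝ) = Real.pi ^ 2 * (2 / Real.pi) by
          field_simp,
        Real.sqrt_mul (sq_nonneg Real.pi), Real.sqrt_sq Real.pi_pos.le]
    rw [hA_def, hS1]
    have hπ := Real.pi_pos
    have hP1 : (0:ℝ) ≤ ((m:ℝ) / ((m:ℝ) + x ^ 2)) ^ ((m:ℝ)/2 + 1) := by positivity
    field_simp
  -- notation
  set K := ∫ w in Set.Ioi (0:ℝ), stdPDF (s * w) * stdPDF (w * x) * w ^ 2 * fW m w with hK_def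
  have hdiff : ∀ u v : ℝ,
      ((∫ w in Set.Ioi (0:ℝ), stdCDF (v * w) * stdPDF (w * x) * w * fW m w) -
        ∫ w in Set.Ioi (0:ℝ), stdCDF (u * w) * stdPDF (w * x) * w * fW m w)
        = ∫ w in Set.Ioi (0:ℝ),
            (stdCDF (v * w) - stdCDF (u * w)) * (stdPDF (w * x) * w * fW m w) := by
    intro u v
    rw [← integral_sub (integrableOn_cdf hm v x) (integrableOn_cdf hm u x)]
    congr 1
    funext w
    ring
  have hIdiff : ∀ u v : ℝ, IntegrableOn
      (fun w => (stdCDF (v * w) - stdCDF (u * w)) * (stdPDF (w * x) * w * fW m w))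
      (Set.Ioi (0:ℝ)) := by
    intro u v
    refine IntegrableOn.congr_fun
      (f := (fun w => stdCDF (v * w) * stdPDF (w * x) * w * fW m w) -
        (fun w => stdCDF (u * w) * stdPDF (w * x) * w * fW m w))
      ((integrableOn_cdf hm v x).sub (integrableOn_cdf hm u x))
      (fun w _ => by simp only [Pi.sub_apply]; ring) measurableSet_Ioi
  have hKmul : ∀ c : ℝ,
      (∫ w in Set.Ioi (0:ℝ), c * (stdPDF (s * w) * stdPDF (w * x) * w ^ 2 * fW m w))
        = c * K := fun c => integral_const_mul c _
  unfold crit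
  rw [hCK]
  rcases le_total t s with hts | hst
  · -- t ≤ s : use lower bound on CDF difference
    have hmain : K * (s - t) ≤
        ((∫ w in Set.Ioi (0:ℝ), stdCDF (s * w) * stdPDF (w * x) * w * fW m w) -
          ∫ w in Set.Ioi (0:ℝ), stdCDF (t * w) * stdPDF (w * x) * w * fW m w) := by
      rw [hdiff t s, mul_comm, ← hKmul (s - t)]
      refine setIntegral_mono_on ((integrableOn_prod hm s x).const_mul _)
        (hIdiff t s) measurableSet_Ioi fun w hw => ?_
      have hw' : (0:ℝ) < w := hw
      have hb := stdCDF_diff_ge (a := t * w) (b := s * w)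
        (by positivity) (mul_le_mul_of_nonneg_right hts hw'.le)
      have hnn : 0 ≤ stdPDF (w * x) * w * fW m w :=
        mul_nonneg (mul_nonneg (stdPDF_nonneg _) hw'.le) (fW_nonneg m hw'.le)
      calc (s - t) * (stdPDF (s * w) * stdPDF (w * x) * w ^ 2 * fW m w)
          = (stdPDF (s * w) * (s * w - t * w)) * (stdPDF (w * x) * w * fW m w) := by
            ring
        _ ≤ (stdCDF (s * w) - stdCDF (t * w)) * (stdPDF (w * x) * w * fW m w) :=
            mul_le_mul_of_nonneg_right hb hnn
    nlinarith [hmain]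
  · -- s ≤ t : use upper bound on CDF difference
    have hmain :
        ((∫ w in Set.Ioi (0:ℝ), stdCDF (t * w) * stdPDF (w * x) * w * fW m w) -
          ∫ w in Set.Ioi (0:ℝ), stdCDF (s * w) * stdPDF (w * x) * w * fW m w)
          ≤ K * (t - s) := by
      rw [hdiff s t, mul_comm, ← hKmul (t - s)]
      refine setIntegral_mono_on (hIdiff s t)
        ((integrableOn_prod hm s x).const_mul _) measurableSet_Ioi fun w hw => ?_
      have hw' : (0:ℝ) < w := hw
      have hb := stdCDF_diff_le (a := s * w) (b := t * w)
        (by positivity) (mul_le_mul_of_nonneg_right hst hw'.le)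
      have hnn : 0 ≤ stdPDF (w * x) * w * fW m w :=
        mul_nonneg (mul_nonneg (stdPDF_nonneg _) hw'.le) (fW_nonneg m hw'.le)
      calc (stdCDF (t * w) - stdCDF (s * w)) * (stdPDF (w * x) * w * fW m w)
          ≤ (stdPDF (s * w) * (t * w - s * w)) * (stdPDF (w * x) * w * fW m w) :=
            mul_le_mul_of_nonneg_right hb hnn
        _ = (t - s) * (stdPDF (s * w) * stdPDF (w * x) * w ^ 2 * fW m w) := by
            ring
    nlinarith [hmain]
end

section
/- (Compromise decision theory bound) Let 𝒮 be a set, R₁, R₂ : 𝒮 × ℝ → ℝ, and π₁, π₂ probability measures on ℝ. For λ ∈ (0,1) define g(s;λ) = λ∫R₁(s;γ)dπ₁(γ) + (1−λ)∫R₂(s;γ)dπ₂(γ). Suppose s_λ minimizes g(·;λ) over 𝒮, and let ν = sup_γ R₂(s_λ;γ) − ∫R₂(s_λ;γ)dπ₂(γ). Then for every s̃ ∈ 𝒮 with sup_γ R₂(s̃;γ) ≤ sup_γ R₂(s_λ;γ), we have ∫R₁(s̃;γ)dπ₁(γ) ≥ ∫R₁(s_λ;γ)dπ₁(γ) − ((1−λ)/λ)·ν.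 -/
open MeasureTheory Real Set

/-- Compromise decision theory bound (Theorem 2.2(a) of Kabaila & Tuck, 2008). -/
theorem stmt11 {S : Type*} (R1 R2 : S → ℝ → ℝ) (π1 π2 : Measure ℝ)
    [IsProbabilityMeasure π1] [IsProbabilityMeasure π2]
    (l : ℝ) (hl : l ∈ Set.Ioo (0 : ℝ) 1)
    (hInt1 : ∀ s : S, Integrable (R1 s) π1) (hInt2 : ∀ s : S, Integrable (R2 s) π2)
    (hbdd : ∀ s : S, BddAbove (Set.range (R2 s)))
    (sl : S)
    (hmin : ∀ s : S,
      l * ∫ γ, R1 sl γ ∂π1 + (1 - l) * ∫ γ, R2 sl γ ∂π2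
        ≤ l * ∫ γ, R1 s γ ∂π1 + (1 - l) * ∫ γ, R2 s γ ∂π2)
    (st : S) (hst : (⨆ γ : ℝ, R2 st γ) ≤ ⨆ γ : ℝ, R2 sl γ) :
    (∫ γ, R1 sl γ ∂π1) - ((1 - l) / l) * ((⨆ γ : ℝ, R2 sl γ) - ∫ γ, R2 sl γ ∂π2)
      ≤ ∫ γ, R1 st γ ∂π1 := by
  obtain ⟨hl0, hl1⟩ := hl
  have hint : (∫ γ, R2 st γ ∂π2) ≤ ⨆ γ : ℝ, R2 st γ := by
    calc (∫ γ, R2 st γ ∂π2) ≤ ∫ _γ, (⨆ γ : ℝ, R2 st γ) ∂π2 :=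
          integral_mono (hInt2 st) (integrable_const _)
            (fun γ => le_ciSup (hbdd st) γ)
      _ = ⨆ γ : ℝ, R2 st γ := by simp
  have key : l * ∫ γ, R1 sl γ ∂π1 + (1 - l) * ∫ γ, R2 sl γ ∂π2
      ≤ l * ∫ γ, R1 st γ ∂π1 + (1 - l) * (⨆ γ : ℝ, R2 sl γ) := by
    refine (hmin st).trans ?_
    have : (∫ γ, R2 st γ ∂π2) ≤ ⨆ γ : ℝ, R2 sl γ := hint.trans hst
    nlinarith
  rw [div_mul_eq_mul_div, sub_le_iff_le_add, ← sub_le_iff_le_add',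
    le_div_iff₀ hl0]
  nlinarith
end
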